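/- Let A_1(c) = c, A_{n+1}(c) = A_n(c)^2 + c, and let B_n ∈ ℤ[c] be the monic polynomials with A_n = ∏_{d|n} B_d. If m ≠ n, then the resultant of B_m and B_n equals ±1 (is a unit in ℤ). -/

import Mathlib

open Polynomial

/-- The Sylvester matrix of two polynomials `p`, `q` over `ℤ`:
the first `q.natDegree` rows contain the shifted coefficient sequences of `p`,
the remaining `p.natDegree` rows those of `q`. -/
def sylvesterMatrix (p q : Polynomial ℤ) :
    Matrix (Fin (q.natDegree + p.natDegree)) (Fin (q.natDegree + p.natDegree)) ℤ :=
  Matrix.of fun i j =>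
    if h : (i : ℕ) < q.natDegree then
      if (i : ℕ) ≤ (j : ℕ) then p.coeff ((j : ℕ) - (i : ℕ)) else 0
    else
      if (i : ℕ) - q.natDegree ≤ (j : ℕ) then q.coeff ((j : ℕ) - ((i : ℕ) - q.natDegree))
      else 0

/-- The resultant of two polynomials over `ℤ`, as the determinant of their
Sylvester matrix. -/
def resultant (p q : Polynomial ℤ) : ℤ := (sylvesterMatrix p q).det

section Aux

variable {R : Type*} [CommRing R]

/-- Generalized Sylvester matrix, over any commutative ring and with explicit dimensions. -/
def sylGen (p q : R[X]) (da db : ℕ) : Matrix (Fin (da + db)) (Fin (da + db)) R :=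
  Matrix.of fun i j =>
    if (i : ℕ) < da then
      if (i : ℕ) ≤ (j : ℕ) then p.coeff ((j : ℕ) - (i : ℕ)) else 0
    else
      if (i : ℕ) - da ≤ (j : ℕ) then q.coeff ((j : ℕ) - ((i : ℕ) - da)) else 0

lemma sylvesterMatrix_eq (p q : Polynomial ℤ) :
    sylvesterMatrix p q = sylGen p q q.natDegree p.natDegree := by
  ext i j
  simp [sylvesterMatrix, sylGen]

lemma sylGen_map {S : Type*} [CommRing S] (φ : R →+* S) (p q : R[X]) (da db : ℕ) :
    (sylGen p q da db).map φ = sylGen (p.map φ) (q.map φ) da db := by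
  ext i j
  simp only [sylGen, Matrix.map_apply, Matrix.of_apply, coeff_map]
  split_ifs <;> simp

lemma sylGen_det_ne_zero {K : Type*} [Field K] (p q : K[X])
    (hp : p.Monic) (hq : q.Monic) (hco : IsCoprime p q) (da db : ℕ)
    (hda : da = q.natDegree) (hdb : db = p.natDegree) :
    (sylGen p q da db).det ≠ 0 := by
  subst hda
  subst hdb
  set a := q.natDegree with ha
  set b := p.natDegree with hb
  intro hdet
  obtain ⟨v, hv0, hv⟩ := Matrix.exists_vecMul_eq_zero_iff.mpr hdet
  set v' : ℕ → K := fun i => if h : i < a + b then v ⟨i, h⟩ else 0 with hv'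
  set u : K[X] := ∑ i ∈ Finset.range a, C (v' i) * X ^ i with hu
  set w : K[X] := ∑ k ∈ Finset.range b, C (v' (a + k)) * X ^ k with hw
  have hucoeff : ∀ j, u.coeff j = if j ∈ Finset.range a then v' j else 0 := by
    intro j
    rw [hu, finset_sum_coeff]
    simp only [coeff_C_mul, coeff_X_pow, mul_ite, mul_one, mul_zero]
    exact Finset.sum_ite_eq (Finset.range a) j v'
  have hwcoeff : ∀ j, w.coeff j = if j ∈ Finset.range b then v' (a + j) else 0 := by
    intro j
    rw [hw, finset_sum_coeff]
    simp only [coeff_C_mul, coeff_X_pow, mul_ite, mul_one, mul_zero]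
    exact Finset.sum_ite_eq (Finset.range b) j fun k => v' (a + k)
  have hup : u * p = ∑ i ∈ Finset.range a, C (v' i) * (p * X ^ i) := by
    rw [hu, Finset.sum_mul]
    exact Finset.sum_congr rfl fun i _ => by ring
  have hwq : w * q = ∑ k ∈ Finset.range b, C (v' (a + k)) * (q * X ^ k) := by
    rw [hw, Finset.sum_mul]
    exact Finset.sum_congr rfl fun i _ => by ring
  have hupc : ∀ d, (u * p).coeff d
      = ∑ i ∈ Finset.range a, v' i * (if i ≤ d then p.coeff (d - i) else 0) := by
    intro d
    rw [hup, finset_sum_coeff]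
    exact Finset.sum_congr rfl fun i _ => by rw [coeff_C_mul, coeff_mul_X_pow']
  have hwqc : ∀ d, (w * q).coeff d
      = ∑ k ∈ Finset.range b, v' (a + k) * (if k ≤ d then q.coeff (d - k) else 0) := by
    intro d
    rw [hwq, finset_sum_coeff]
    exact Finset.sum_congr rfl fun i _ => by rw [coeff_C_mul, coeff_mul_X_pow']
  have hzero : u * p + w * q = 0 := by
    ext d
    rw [coeff_add, coeff_zero, hupc, hwqc]
    by_cases hd : d < a + b
    · have hvd := congrFun hv (⟨d, hd⟩ : Fin (a + b))
      simp only [Matrix.vecMul, dotProduct, Pi.zero_apply] at hvd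
      have h1 : ∑ i ∈ Finset.range (a + b),
          v' i * (if i < a then (if i ≤ d then p.coeff (d - i) else 0)
            else (if i - a ≤ d then q.coeff (d - (i - a)) else 0)) = 0 := by
        rw [Finset.sum_range]
        refine (Finset.sum_congr rfl fun i _ => ?_).trans hvd
        have hvv : v' (i : ℕ) = v i := by simp [hv']
        rw [hvv]
        rfl
      rw [Finset.sum_range_add] at h1
      have h2 : ∑ i ∈ Finset.range a,
          v' i * (if i < a then (if i ≤ d then p.coeff (d - i) else 0)
            else (if i - a ≤ d then q.coeff (d - (i - a)) else 0))
          = ∑ i ∈ Finset.range a, v' i * (if i ≤ d then p.coeff (d - i) else 0) := by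
        apply Finset.sum_congr rfl
        intro i hi
        rw [Finset.mem_range] at hi
        rw [if_pos hi]
      have h3 : ∑ k ∈ Finset.range b,
          v' (a + k) * (if a + k < a then (if a + k ≤ d then p.coeff (d - (a + k)) else 0)
            else (if a + k - a ≤ d then q.coeff (d - (a + k - a)) else 0))
          = ∑ k ∈ Finset.range b, v' (a + k) * (if k ≤ d then q.coeff (d - k) else 0) := by
        apply Finset.sum_congr rfl
        intro k hk
        have h4 : ¬(a + k < a) := by omega
        have h5 : a + k - a = k := by omega
        rw [if_neg h4, h5]
      rw [h2, h3] at h1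
      exact h1
    · push_neg at hd
      have h1 : ∀ i ∈ Finset.range a, v' i * (if i ≤ d then p.coeff (d - i) else 0) = 0 := by
        intro i hi
        rw [Finset.mem_range] at hi
        have : p.coeff (d - i) = 0 := coeff_eq_zero_of_natDegree_lt (by omega)
        simp [this]
      have h2 : ∀ k ∈ Finset.range b, v' (a + k) * (if k ≤ d then q.coeff (d - k) else 0) = 0 := by
        intro k hk
        rw [Finset.mem_range] at hk
        have : q.coeff (d - k) = 0 := coeff_eq_zero_of_natDegree_lt (by omega)
        simp [this]
      rw [Finset.sum_eq_zero h1, Finset.sum_eq_zero h2, add_zero]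
  have hp0 : p ≠ 0 := hp.ne_zero
  have hqdvd : p ∣ w * q := ⟨-u, by linear_combination hzero⟩
  have hpw : p ∣ w := hco.dvd_of_dvd_mul_right hqdvd
  have hw0 : w = 0 := by
    by_contra hw0
    have h1 : p.degree ≤ w.degree := degree_le_of_dvd hpw hw0
    have h2 : w.degree < (b : WithBot ℕ) := by
      rw [hw]
      apply lt_of_le_of_lt (degree_sum_le _ _)
      rw [Finset.sup_lt_iff (by exact WithBot.bot_lt_coe b)]
      intro k hk
      rw [Finset.mem_range] at hk
      calc degree (C (v' (a + k)) * X ^ k) ≤ degree (C (v' (a + k))) + degree (X ^ k) :=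
            degree_mul_le _ _
        _ ≤ 0 + (k : WithBot ℕ) := by
            exact add_le_add degree_C_le (le_of_eq (degree_X_pow k))
        _ < (b : WithBot ℕ) := by
            rw [zero_add]
            exact_mod_cast hk
    have h3 : p.degree = (b : WithBot ℕ) := degree_eq_natDegree hp0
    rw [h3] at h1
    exact absurd (lt_of_le_of_lt h1 h2) (lt_irrefl _)
  have hu0 : u = 0 := by
    have : u * p = 0 := by rw [hw0, zero_mul, add_zero] at hzero; exact hzero
    rcases mul_eq_zero.mp this with h | h
    · exact h
    · exact absurd h hp0
  apply hv0
  funext i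
  by_cases hia : (i : ℕ) < a
  · have := hucoeff i
    rw [hu0, coeff_zero, if_pos (Finset.mem_range.mpr hia)] at this
    rw [hv'] at this
    simp only [i.isLt, dif_pos] at this
    rw [← this]
    rfl
  · push_neg at hia
    have hib : (i : ℕ) - a < b := by omega
    have := hwcoeff ((i : ℕ) - a)
    rw [hw0, coeff_zero, if_pos (Finset.mem_range.mpr hib)] at this
    have hia' : a + ((i : ℕ) - a) = (i : ℕ) := by omega
    rw [hia', hv'] at this
    simp only [i.isLt, dif_pos] at this
    rw [← this]
    rfl

end Aux

lemma rootMult_prod {K : Type*} [Field K] (α : K) (s : Finset ℕ) (f : ℕ → K[X]) :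
    (∀ d ∈ s, f d ≠ 0) →
    rootMultiplicity α (∏ d ∈ s, f d) = ∑ d ∈ s, rootMultiplicity α (f d) := by
  classical
  induction s using Finset.induction_on with
  | empty =>
    intro _
    rw [Finset.prod_empty, Finset.sum_empty, rootMultiplicity_eq_zero]
    simp [IsRoot]
  | @insert x s hx ih =>
    intro hf
    have hprodne : (∏ d ∈ s, f d) ≠ 0 :=
      Finset.prod_ne_zero_iff.mpr fun d hd => hf d (Finset.mem_insert_of_mem hd)
    rw [Finset.prod_insert hx, Finset.sum_insert hx,
      rootMultiplicity_mul (mul_ne_zero (hf x (Finset.mem_insert_self x s)) hprodne),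
      ih fun d hd => hf d (Finset.mem_insert_of_mem hd)]

lemma no_common_root {K : Type*} [Field K] (a b : ℕ → K[X])
    (ha1 : a 1 = X) (harec : ∀ k, 1 ≤ k → a (k + 1) = (a k) ^ 2 + X)
    (hbm : ∀ k, 1 ≤ k → (b k).Monic)
    (hprod : ∀ k, 1 ≤ k → a k = ∏ d ∈ k.divisors, b d)
    (m n : ℕ) (hm : 1 ≤ m) (hn : 1 ≤ n) (hmn : m ≠ n) (α : K)
    (hrm : (b m).IsRoot α) (hrn : (b n).IsRoot α) : False := by
  classical
  have haM0 : ∀ k : ℕ, (a (k + 1)).Monic ∧ 1 ≤ (a (k + 1)).natDegree := by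
    intro k
    induction k with
    | zero => rw [ha1]; exact ⟨monic_X, le_of_eq natDegree_X.symm⟩
    | succ k ih =>
      obtain ⟨hmon, hdeg⟩ := ih
      have hsq : ((a (k + 1)) ^ 2).Monic := hmon.pow _
      have hdd : ((a (k + 1)) ^ 2).natDegree = 2 * (a (k + 1)).natDegree :=
        hmon.natDegree_pow 2
      have hlt : degree (X : K[X]) < degree ((a (k + 1)) ^ 2) := by
        rw [degree_X, degree_eq_natDegree hsq.ne_zero, hdd]
        exact_mod_cast (by omega : 1 < 2 * (a (k + 1)).natDegree)
      have hmon2 : (a (k + 1 + 1)).Monic := by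
        rw [harec (k + 1) (by omega)]
        exact hsq.add_of_left hlt
      refine ⟨hmon2, ?_⟩
      have hdeq : (a (k + 1 + 1)).degree = ((a (k + 1)) ^ 2).degree := by
        rw [harec (k + 1) (by omega)]
        exact degree_add_eq_left_of_degree_lt hlt
      have := natDegree_eq_of_degree_eq hdeq
      omega
  have haM : ∀ k, 1 ≤ k → (a k).Monic := by
    intro k hk
    obtain ⟨j, rfl⟩ : ∃ j, k = j + 1 := ⟨k - 1, by omega⟩
    exact (haM0 j).1
  have hane : ∀ k, 1 ≤ k → a k ≠ 0 := fun k hk => (haM k hk).ne_zero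
  have hstep : ∀ d, 1 ≤ d → ∀ k, 1 ≤ k → (a d) ^ 2 ∣ a (k + d) - a k := by
    intro d hd k
    induction k with
    | zero => omega
    | succ k ih =>
      intro _
      rcases Nat.lt_or_ge k 1 with h1 | h1
      · have hk0 : k = 0 := by omega
        subst hk0
        have h2 : a (0 + 1 + d) = a d ^ 2 + X := by
          rw [show 0 + 1 + d = d + 1 from by omega]
          exact harec d hd
        rw [h2, show (0 : ℕ) + 1 = 1 from rfl, ha1]
        simp
      · have e1 : a (k + 1 + d) = a (k + d) ^ 2 + X := by
          rw [show k + 1 + d = (k + d) + 1 from by omega]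
          exact harec (k + d) (by omega)
        have e2 : a (k + 1) = a k ^ 2 + X := harec k h1
        have e3 : a (k + 1 + d) - a (k + 1) = (a (k + d) - a k) * (a (k + d) + a k) := by
          rw [e1, e2]; ring
        rw [e3]
        exact (ih h1).mul_right _
  have hmul : ∀ d, 1 ≤ d → ∀ qq, 1 ≤ qq → (a d) ^ 2 ∣ a (qq * d) - a d := by
    intro d hd qq
    induction qq with
    | zero => omega
    | succ qq ih =>
      intro _
      rcases Nat.lt_or_ge qq 1 with h1 | h1
      · have hq0 : qq = 0 := by omega
        subst hq0
        rw [show (0 + 1) * d = d from by ring, sub_self]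
        exact dvd_zero _
      · have h2 : 1 ≤ qq * d := by
          have := Nat.mul_pos (by omega : 0 < qq) (by omega : 0 < d)
          omega
        have e3 : a ((qq + 1) * d) - a d = (a (qq * d + d) - a (qq * d)) + (a (qq * d) - a d) := by
          rw [show (qq + 1) * d = qq * d + d from by ring]; ring
        rw [e3]
        exact dvd_add (hstep d hd (qq * d) h2) (ih h1)
  have hbdvd : ∀ k, 1 ≤ k → b k ∣ a k := by
    intro k hk
    rw [hprod k hk]
    exact Finset.dvd_prod_of_mem b (Nat.mem_divisors_self k (by omega))
  have haroot : ∀ k, 1 ≤ k → (b k).IsRoot α → (a k).eval α = 0 := by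
    intro k hk hr
    obtain ⟨t, ht⟩ := hbdvd k hk
    rw [ht, eval_mul, hr, zero_mul]
  have hP : ∃ k, 1 ≤ k ∧ (a k).eval α = 0 := ⟨m, hm, haroot m hm hrm⟩
  set e := Nat.find hP with he
  have hspec := Nat.find_spec hP
  rw [← he] at hspec
  obtain ⟨he1, he0⟩ := hspec
  have hmin : ∀ j, j < e → ¬(1 ≤ j ∧ (a j).eval α = 0) := by
    intro j hj
    exact Nat.find_min hP (by rw [← he]; exact hj)
  have hshift : ∀ k, 1 ≤ k → (a (k + e)).eval α = (a k).eval α := by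
    intro k hk
    obtain ⟨t, ht⟩ := hstep e he1 k hk
    have h4 : a (k + e) = a k + (a e) ^ 2 * t := by rw [← ht]; ring
    rw [h4]
    simp [he0]
  have hperiod : ∀ k, 1 ≤ k → (a k).eval α = 0 → e ∣ k := by
    intro k
    induction k using Nat.strong_induction_on with
    | _ k ih =>
      intro hk h0
      have hek : e ≤ k := by
        by_contra hlt
        exact hmin k (by omega) ⟨hk, h0⟩
      rcases Nat.eq_or_lt_of_le hek with hhe | hhe
      · exact hhe ▸ dvd_refl e
      · have hk' : 1 ≤ k - e := by omega
        have h3 := hshift (k - e) hk'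
        rw [show k - e + e = k from by omega] at h3
        have h2 : (a (k - e)).eval α = 0 := by rw [← h3]; exact h0
        have hdvd := ih (k - e) (by omega) hk' h2
        have h5 : e ∣ (k - e) + e := Nat.dvd_add hdvd dvd_rfl
        rwa [Nat.sub_add_cancel (le_of_lt hhe)] at h5
  have hkey : ∀ k, 1 ≤ k → (b k).IsRoot α → k = e := by
    intro k hk hr
    have hak := haroot k hk hr
    have hek : e ∣ k := hperiod k hk hak
    obtain ⟨qq, hqq⟩ := hek
    have hqqne : qq ≠ 0 := by
      rintro rfl
      simp at hqq
      omega
    obtain ⟨t, ht⟩ := hmul e he1 qq (by omega)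
    have hqe : qq * e = k := (Nat.mul_comm qq e).trans hqq.symm
    rw [hqe] at ht
    have hfac : a k = a e * (1 + a e * t) := by
      have h4 : a k = a e + (a e) ^ 2 * t := by rw [← ht]; ring
      rw [h4]; ring
    have hne : a e * (1 + a e * t) ≠ 0 := by rw [← hfac]; exact hane k hk
    have hnr : ¬(1 + a e * t).IsRoot α := by simp [IsRoot, he0]
    have hkeymult : rootMultiplicity α (a k) = rootMultiplicity α (a e) := by
      rw [hfac, rootMultiplicity_mul hne, rootMultiplicity_eq_zero hnr, add_zero]
    have hsum : ∑ d ∈ k.divisors, rootMultiplicity α (b d)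
        = ∑ d ∈ e.divisors, rootMultiplicity α (b d) := by
      rw [← rootMult_prod α k.divisors b
          (fun d hd => (hbm d (Nat.pos_of_mem_divisors hd)).ne_zero),
        ← rootMult_prod α e.divisors b
          (fun d hd => (hbm d (Nat.pos_of_mem_divisors hd)).ne_zero),
        ← hprod k hk, ← hprod e he1]
      exact hkeymult
    have hsub : e.divisors ⊆ k.divisors :=
      Nat.divisors_subset_of_dvd (by omega) (hperiod k hk hak)
    have hsdiff : (∑ d ∈ k.divisors \ e.divisors, rootMultiplicity α (b d))
        + ∑ d ∈ e.divisors, rootMultiplicity α (b d)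
        = ∑ d ∈ k.divisors, rootMultiplicity α (b d) := Finset.sum_sdiff hsub
    have hzero : ∑ d ∈ k.divisors \ e.divisors, rootMultiplicity α (b d) = 0 := by omega
    by_contra hne2
    have hkmem : k ∉ e.divisors := by
      intro hmem
      exact hne2 (Nat.dvd_antisymm (Nat.mem_divisors.mp hmem).1 (hperiod k hk hak))
    have hkdiff : k ∈ k.divisors \ e.divisors :=
      Finset.mem_sdiff.mpr ⟨Nat.mem_divisors_self k (by omega), hkmem⟩
    have h5 := (Finset.sum_eq_zero_iff.mp hzero) k hkdiff
    have h6 : 0 < rootMultiplicity α (b k) := (rootMultiplicity_pos (hbm k hk).ne_zero).mpr hr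
    omega
  exact hmn ((hkey m hm hrm).trans (hkey n hn hrn).symm)

theorem stmt_5 (A : ℕ → Polynomial ℤ)
    (hA1 : A 1 = X)
    (hArec : ∀ n ≥ 1, A (n + 1) = (A n) ^ 2 + X)
    (B : ℕ → Polynomial ℤ)
    (hBmonic : ∀ n ≥ 1, (B n).Monic)
    (hBprod : ∀ n ≥ 1, A n = ∏ d ∈ n.divisors, B d)
    (m n : ℕ) (hm : 1 ≤ m) (hn : 1 ≤ n) (hmn : m ≠ n) :
    _root_.resultant (B m) (B n) = 1 ∨ _root_.resultant (B m) (B n) = -1 := by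
  classical
  by_contra hcon
  push_neg at hcon
  obtain ⟨h1, h2⟩ := hcon
  have hnabs : (_root_.resultant (B m) (B n)).natAbs ≠ 1 := by omega
  obtain ⟨pp, hpp, hdvd⟩ := Int.exists_prime_and_dvd hnabs
  set ℓ := pp.natAbs with hl
  have hlp : ℓ.Prime := Int.prime_iff_natAbs_prime.mp hpp
  haveI : Fact ℓ.Prime := ⟨hlp⟩
  set K := AlgebraicClosure (ZMod ℓ) with hK
  set φ : ℤ →+* K := Int.castRingHom K with hφ
  have hldvd : (ℓ : ℤ) ∣ _root_.resultant (B m) (B n) := Int.natAbs_dvd.mpr hdvd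
  have hres0 : φ (_root_.resultant (B m) (B n)) = 0 := by
    obtain ⟨t, ht⟩ := hldvd
    rw [ht, map_mul]
    have hφl : φ ((ℓ : ℤ)) = 0 := by
      rw [map_natCast φ ℓ]
      exact CharP.cast_eq_zero K ℓ
    rw [hφl, zero_mul]
  have hBmmap : ((B m).map φ).Monic := (hBmonic m hm).map φ
  have hBnmap : ((B n).map φ).Monic := (hBmonic n hn).map φ
  have hcop : IsCoprime ((B m).map φ) ((B n).map φ) := by
    by_contra hnc
    rw [← EuclideanDomain.gcd_isUnit_iff] at hnc
    set g := EuclideanDomain.gcd ((B m).map φ) ((B n).map φ) with hg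
    have hg0 : g ≠ 0 := by
      intro h
      rw [hg] at h
      exact hBmmap.ne_zero (EuclideanDomain.gcd_eq_zero_iff.mp h).1
    have hdeg : g.degree ≠ 0 := fun h => hnc (Polynomial.isUnit_iff_degree_eq_zero.mpr h)
    obtain ⟨α, hα⟩ := IsAlgClosed.exists_root g hdeg
    have hgm : g ∣ (B m).map φ := EuclideanDomain.gcd_dvd_left _ _
    have hgn : g ∣ (B n).map φ := EuclideanDomain.gcd_dvd_right _ _
    have hrootm : ((B m).map φ).IsRoot α := by
      obtain ⟨t, ht⟩ := hgm
      rw [IsRoot, ht, eval_mul, hα, zero_mul]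
    have hrootn : ((B n).map φ).IsRoot α := by
      obtain ⟨t, ht⟩ := hgn
      rw [IsRoot, ht, eval_mul, hα, zero_mul]
    exact no_common_root (fun k => (A k).map φ) (fun k => (B k).map φ)
      (by simp only [hA1, Polynomial.map_X])
      (fun k hk => by
        simp only [hArec k hk, Polynomial.map_add, Polynomial.map_pow, Polynomial.map_X])
      (fun k hk => (hBmonic k hk).map φ)
      (fun k hk => by simp only [hBprod k hk, Polynomial.map_prod])
      m n hm hn hmn α hrootm hrootn
  have hdetne := sylGen_det_ne_zero ((B m).map φ) ((B n).map φ) hBmmap hBnmap hcop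
    (B n).natDegree (B m).natDegree ((hBmonic n hn).natDegree_map φ).symm
    ((hBmonic m hm).natDegree_map φ).symm
  have hresmap : φ (_root_.resultant (B m) (B n))
      = (sylGen ((B m).map φ) ((B n).map φ) (B n).natDegree (B m).natDegree).det := by
    rw [_root_.resultant, sylvesterMatrix_eq, RingHom.map_det, RingHom.mapMatrix_apply, sylGen_map]
  exact hdetne (hresmap ▸ hres0)
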